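/- There exists d₀ such that the following holds for every power of two d ≥ d₀ with log₂ d even. Let d' = d + log₂ d and let Q ⊆ {0,1}^{d'} be a set of at most d·log₂ d points such that every two distinct points of Q differ in at least 5 coordinates. Choose k uniformly at random from {1,…,(log₂ d)/2}, and then choose R uniformly at random among all subsets of {1,…,d} of size 2^k. Then the probability that there exist distinct x, y ∈ Q with cap(x,y) ⊆ R is at most d^{−1/4}. -/

import Mathlib

open Finset

/-- The set of coordinates at which `x` and `y` differ. -/
def diffSet {m : ℕ} (x y : Fin m → Bool) : Finset (Fin m) :=
  Finset.univ.filter fun b => x b ≠ y b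

/-- `cap(x,y)`: the 5 largest coordinates at which `x` and `y` differ. -/
def capSet {m : ℕ} (x y : Fin m → Bool) : Finset (Fin m) :=
  (diffSet x y).filter fun b => ((diffSet x y).filter fun b' => b < b').card < 5

lemma sq_le_two_pow : ∀ q : ℕ, 4 ≤ q → q * q ≤ 2 ^ q := by
  intro q hq
  induction q, hq using Nat.le_induction with
  | base => norm_num
  | succ n hn ih =>
    have h1 : 2 * n + 1 ≤ n * n := by nlinarith
    calc (n+1) * (n+1) = n*n + (2*n+1) := by ring
      _ ≤ 2^n + 2^n := Nat.add_le_add ih (h1.trans ih)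
      _ = 2^(n+1) := by rw [pow_succ]; ring

lemma geom_bound : ∀ m : ℕ, ∑ k ∈ Finset.Icc 1 m, 32 ^ k ≤ 2 * 32 ^ m := by
  intro m
  induction m with
  | zero => simp
  | succ n ih =>
    rw [Finset.sum_Icc_succ_top (by omega)]
    have h2 : (2:ℕ) * 32 ^ (n+1) = 64 * 32^n := by rw [pow_succ]; ring
    have h3 : (32:ℕ) ^ (n+1) = 32 * 32^n := by rw [pow_succ]; ring
    omega

lemma filter_top_card {α : Type*} [LinearOrder α] (t : Finset α) (j : ℕ) (hj : j ≤ t.card) :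
    (t.filter fun b => (t.filter fun b' => b < b').card < j).card = j := by
  classical
  set f : α → ℕ := fun b => (t.filter fun b' => b < b').card with hf
  have hanti : ∀ a ∈ t, ∀ b ∈ t, a < b → f b < f a := by
    intro a ha b hb hab
    refine Finset.card_lt_card ((Finset.ssubset_iff_of_subset ?_).mpr ⟨b, ?_, ?_⟩)
    · intro x hx
      rw [Finset.mem_filter] at hx ⊢
      exact ⟨hx.1, hab.trans hx.2⟩
    · exact Finset.mem_filter.mpr ⟨hb, hab⟩
    · simp
  have hinj : Set.InjOn f t := by
    intro a ha b hb hab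
    by_contra hne
    rcases lt_or_gt_of_ne hne with h | h
    · exact absurd hab (hanti a ha b hb h).ne'
    · exact absurd hab (hanti b hb a ha h).ne
  have hlt : ∀ a ∈ t, f a < t.card := by
    intro a ha
    have h1 : f a ≤ (t.erase a).card := by
      apply Finset.card_le_card
      intro x hx
      rw [Finset.mem_filter] at hx
      exact Finset.mem_erase.mpr ⟨hx.2.ne', hx.1⟩
    have h2 : (t.erase a).card < t.card := Finset.card_erase_lt_of_mem ha
    omega
  have himg : t.image f = Finset.range t.card := by
    apply Finset.eq_of_subset_of_card_le
    · intro x hx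
      rw [Finset.mem_image] at hx
      obtain ⟨a, ha, rfl⟩ := hx
      exact Finset.mem_range.mpr (hlt a ha)
    · rw [Finset.card_range, Finset.card_image_of_injOn hinj]
  have key : (t.filter fun b => f b < j).image f = (Finset.range t.card).filter (· < j) := by
    rw [← himg, Finset.filter_image]
  have hrange : (Finset.range t.card).filter (· < j) = Finset.range j := by
    ext x; simp; omega
  calc (t.filter fun b => f b < j).card
      = ((t.filter fun b => f b < j).image f).card :=
        (Finset.card_image_of_injOn (hinj.mono (Finset.filter_subset _ t))).symm
    _ = j := by rw [key, hrange, Finset.card_range]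

lemma count_supersets {α : Type*} [DecidableEq α] (U S : Finset α) (n : ℕ) (hS : S.card = 5) :
    ((U.powersetCard n).filter fun R => S ⊆ R).card ≤ (U.card - 5).choose (n - 5) := by
  by_cases hSU : S ⊆ U
  · have h := Finset.card_le_card_of_injOn (s := (U.powersetCard n).filter fun R => S ⊆ R)
      (t := (U \ S).powersetCard (n - 5)) (fun R => R \ S)
      ?_ ?_
    · calc ((U.powersetCard n).filter fun R => S ⊆ R).card
          ≤ ((U \ S).powersetCard (n-5)).card := h
        _ = (U.card - 5).choose (n-5) := by
            rw [Finset.card_powersetCard, Finset.card_sdiff_of_subset hSU, hS]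
    · intro R hR
      rw [Finset.mem_coe, Finset.mem_filter, Finset.mem_powersetCard] at hR
      obtain ⟨⟨hRU, hRcard⟩, hSR⟩ := hR
      rw [Finset.mem_coe, Finset.mem_powersetCard]
      refine ⟨Finset.sdiff_subset_sdiff hRU (le_refl S), ?_⟩
      rw [Finset.card_sdiff_of_subset hSR, hRcard, hS]
    · intro R1 h1 R2 h2 heq
      simp only [Finset.mem_coe, Finset.mem_filter] at h1 h2
      have e1 : R1 \ S ∪ S = R1 := Finset.sdiff_union_of_subset h1.2
      have e2 : R2 \ S ∪ S = R2 := Finset.sdiff_union_of_subset h2.2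
      simp only at heq
      rw [← e1, ← e2, heq]
  · have hempty : ((U.powersetCard n).filter fun R => S ⊆ R) = ∅ := by
      rw [Finset.filter_eq_empty_iff]
      intro R hR hSR
      exact hSU (hSR.trans (Finset.mem_powersetCard.mp hR).1)
    simp [hempty]
theorem stmt11 : ∃ d₀ : ℕ, ∀ p d : ℕ, d = 2 ^ p → Even p → d₀ ≤ d →
    ∀ Q : Finset (Fin (d + p) → Bool), Q.card ≤ d * p →
    (∀ x ∈ Q, ∀ y ∈ Q, x ≠ y → 5 ≤ (diffSet x y).card) →
    ((p / 2 : ℝ))⁻¹ * ∑ k ∈ Finset.Icc 1 (p / 2),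
      (((((Finset.univ : Finset (Fin (d + p))).filter fun b : Fin (d + p) => (b : ℕ) < d).powersetCard
            (2 ^ k)).filter fun R =>
          ∃ x ∈ Q, ∃ y ∈ Q, x ≠ y ∧ capSet x y ⊆ R).card : ℝ) /
      (((((Finset.univ : Finset (Fin (d + p))).filter fun b : Fin (d + p) => (b : ℕ) < d).powersetCard
            (2 ^ k))).card : ℝ)
    ≤ (d : ℝ) ^ (-(1 / 4) : ℝ) := by
  use 2 ^ 300000
  intro p d hd hp hd0 Q hQcard hdiff
  have hp0 : 300000 ≤ p := by
    rw [hd] at hd0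
    exact (Nat.pow_le_pow_iff_right (by norm_num)).mp hd0
  obtain ⟨m, hm⟩ := hp
  have hpm : p = 2 * m := by omega
  have hm0 : 150000 ≤ m := by omega
  have hp2 : p / 2 = m := by omega
  set U : Finset (Fin (d+p)) :=
    (Finset.univ : Finset (Fin (d + p))).filter (fun b : Fin (d + p) => (b : ℕ) < d) with hUdef
  have hUcard : U.card = d := by
    have himg : U.image Fin.val = Finset.range d := by
      ext a
      simp only [hUdef, Finset.mem_image, Finset.mem_filter, Finset.mem_univ, true_and,
        Finset.mem_range]
      constructor
      · rintro ⟨b, hb, rfl⟩; exact hb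
      · intro ha; exact ⟨⟨a, by omega⟩, ha, rfl⟩
    have h2 := Finset.card_image_of_injective U Fin.val_injective
    rw [himg, Finset.card_range] at h2
    exact h2.symm
  have hd5 : 5 ≤ d := by
    have : 2^5 ≤ 2^p := Nat.pow_le_pow_right (by norm_num) (by omega)
    omega
  have hcap5 : ∀ x ∈ Q, ∀ y ∈ Q, x ≠ y → (capSet x y).card = 5 := by
    intro x hx y hy hxy
    exact filter_top_card (diffSet x y) 5 (hdiff x hx y hy hxy)
  -- per-k bound
  have hperk : ∀ k ∈ Finset.Icc 1 m,
      (((U.powersetCard (2 ^ k)).filter fun R =>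
          ∃ x ∈ Q, ∃ y ∈ Q, x ≠ y ∧ capSet x y ⊆ R).card : ℝ) /
        ((U.powersetCard (2 ^ k)).card : ℝ)
      ≤ (Q.card : ℝ)^2 * (((2^k).choose 5 : ℕ) : ℝ) / ((d.choose 5 : ℕ) : ℝ) := by
    intro k hk
    rw [Finset.mem_Icc] at hk
    have hnd : 2^k ≤ d := by rw [hd]; exact Nat.pow_le_pow_right (by norm_num) (by omega)
    set n := 2^k with hn
    have hnat : ((U.powersetCard n).filter fun R =>
          ∃ x ∈ Q, ∃ y ∈ Q, x ≠ y ∧ capSet x y ⊆ R).card * d.choose 5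
        ≤ Q.card^2 * (n.choose 5) * (d.choose n) := by
      by_cases h5 : 5 ≤ n
      · have hub : ((U.powersetCard n).filter fun R =>
            ∃ x ∈ Q, ∃ y ∈ Q, x ≠ y ∧ capSet x y ⊆ R).card
            ≤ Q.card^2 * ((d-5).choose (n-5)) := by
          have hsub : ((U.powersetCard n).filter fun R =>
              ∃ x ∈ Q, ∃ y ∈ Q, x ≠ y ∧ capSet x y ⊆ R)
              ⊆ (Q ×ˢ Q).biUnion (fun z =>
                (U.powersetCard n).filter fun R => z.1 ≠ z.2 ∧ capSet z.1 z.2 ⊆ R) := by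
            intro R hR
            rw [Finset.mem_filter] at hR
            obtain ⟨hRm, x, hx, y, hy, hxy, hss⟩ := hR
            exact Finset.mem_biUnion.mpr ⟨(x,y), Finset.mem_product.mpr ⟨hx, hy⟩,
              Finset.mem_filter.mpr ⟨hRm, hxy, hss⟩⟩
          calc ((U.powersetCard n).filter fun R =>
                ∃ x ∈ Q, ∃ y ∈ Q, x ≠ y ∧ capSet x y ⊆ R).card
              ≤ ((Q ×ˢ Q).biUnion (fun z =>
                (U.powersetCard n).filter fun R => z.1 ≠ z.2 ∧ capSet z.1 z.2 ⊆ R)).card :=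
                Finset.card_le_card hsub
            _ ≤ ∑ z ∈ Q ×ˢ Q,
                ((U.powersetCard n).filter fun R => z.1 ≠ z.2 ∧ capSet z.1 z.2 ⊆ R).card :=
                Finset.card_biUnion_le
            _ ≤ ∑ _z ∈ Q ×ˢ Q, (d-5).choose (n-5) := by
                apply Finset.sum_le_sum
                intro z hz
                rw [Finset.mem_product] at hz
                by_cases hzz : z.1 = z.2
                · have he : ((U.powersetCard n).filter fun R =>
                      z.1 ≠ z.2 ∧ capSet z.1 z.2 ⊆ R) = ∅ := by
                    apply Finset.filter_false_of_mem
                    intro R _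
                    simp [hzz]
                  simp [he]
                · calc ((U.powersetCard n).filter fun R => z.1 ≠ z.2 ∧ capSet z.1 z.2 ⊆ R).card
                      ≤ ((U.powersetCard n).filter fun R => capSet z.1 z.2 ⊆ R).card :=
                        Finset.card_le_card
                          (Finset.monotone_filter_right _ (fun R _ hR => hR.2))
                    _ ≤ (U.card - 5).choose (n-5) :=
                        count_supersets U _ n (hcap5 z.1 hz.1 z.2 hz.2 hzz)
                    _ = (d-5).choose (n-5) := by rw [hUcard]
            _ = Q.card^2 * ((d-5).choose (n-5)) := by
                rw [Finset.sum_const, Finset.card_product, smul_eq_mul]; ring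
        calc ((U.powersetCard n).filter fun R =>
              ∃ x ∈ Q, ∃ y ∈ Q, x ≠ y ∧ capSet x y ⊆ R).card * d.choose 5
            ≤ Q.card^2 * ((d-5).choose (n-5)) * d.choose 5 := Nat.mul_le_mul_right _ hub
          _ = Q.card^2 * (n.choose 5) * (d.choose n) := by
              rw [mul_assoc, mul_assoc]
              congr 1
              rw [mul_comm (n.choose 5), Nat.choose_mul (n := d) h5]
              ring
      · have he : ((U.powersetCard n).filter fun R =>
            ∃ x ∈ Q, ∃ y ∈ Q, x ≠ y ∧ capSet x y ⊆ R) = ∅ := by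
          rw [Finset.filter_eq_empty_iff]
          rintro R hR ⟨x, hx, y, hy, hxy, hss⟩
          have h1 : (capSet x y).card ≤ R.card := Finset.card_le_card hss
          rw [hcap5 x hx y hy hxy, (Finset.mem_powersetCard.mp hR).2] at h1
          omega
        simp [he]
    have hTpos : 0 < d.choose n := Nat.choose_pos hnd
    have h5d : 0 < d.choose 5 := Nat.choose_pos hd5
    rw [Finset.card_powersetCard, hUcard,
      div_le_div_iff₀ (by exact_mod_cast hTpos) (by exact_mod_cast h5d)]
    exact_mod_cast hnat

  -- assemble
  rw [hp2]
  have hcoef : ((p:ℝ)/2)⁻¹ = ((m:ℝ))⁻¹ := by rw [hpm]; push_cast; ring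
  rw [hcoef]
  set a := 2^m with ha
  have hda : d = a^2 := by rw [hd, hpm, mul_comm 2 m, pow_mul, ha]
  have h32d : 32 ≤ d := by
    have : 2^5 ≤ 2^p := Nat.pow_le_pow_right (by norm_num) (by omega)
    omega
  have hapos : 0 < a := pow_pos (by norm_num) m
  have hApos : (0:ℝ) < (a:ℝ) := by exact_mod_cast hapos
  have hmR : (0:ℝ) < (m:ℝ) := by exact_mod_cast (by omega : 0 < m)
  have hDcast : (0:ℝ) < ((d.choose 5 : ℕ) : ℝ) := by exact_mod_cast Nat.choose_pos hd5
  -- sum of choose bound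
  have hnat2 : ∑ k ∈ Finset.Icc 1 m, (2^k).choose 5 ≤ 2 * a^5 := by
    have h32 : (32:ℕ)^m = a^5 := by rw [ha, ← pow_mul, mul_comm m 5, pow_mul]; norm_num
    calc ∑ k ∈ Finset.Icc 1 m, (2^k).choose 5 ≤ ∑ k ∈ Finset.Icc 1 m, 32^k := by
          apply Finset.sum_le_sum
          intro k _
          calc (2^k).choose 5 ≤ (2^k)^5 := Nat.choose_le_pow _ _
            _ = 32^k := by rw [← pow_mul, mul_comm k 5, pow_mul]; norm_num
      _ ≤ 2*32^m := geom_bound m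
      _ = 2*a^5 := by rw [h32]
  have hchoosesum : (∑ k ∈ Finset.Icc 1 m, (((2^k).choose 5 : ℕ):ℝ)) ≤ 2*(a:ℝ)^5 := by
    calc (∑ k ∈ Finset.Icc 1 m, (((2^k).choose 5 : ℕ):ℝ))
        = ((∑ k ∈ Finset.Icc 1 m, (2^k).choose 5 : ℕ) : ℝ) := by push_cast; rfl
      _ ≤ ((2*a^5 : ℕ):ℝ) := by exact_mod_cast hnat2
      _ = 2*(a:ℝ)^5 := by push_cast; ring
  have hsum2 : ∑ k ∈ Finset.Icc 1 m, (Q.card:ℝ)^2 * (((2^k).choose 5 : ℕ):ℝ)/((d.choose 5:ℕ):ℝ)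
      ≤ (Q.card:ℝ)^2 * (2*(a:ℝ)^5) / ((d.choose 5:ℕ):ℝ) := by
    rw [← Finset.sum_div, ← Finset.mul_sum]
    gcongr
  have hQreal : (Q.card:ℝ) ≤ 2*(m:ℝ)*(a:ℝ)^2 := by
    calc (Q.card:ℝ) ≤ ((d*p:ℕ):ℝ) := by exact_mod_cast hQcard
      _ = 2*(m:ℝ)*(a:ℝ)^2 := by rw [hda, hpm]; push_cast; ring
  -- lower bound on choose d 5
  have hD : ((a:ℝ)^10)/3840 ≤ ((d.choose 5:ℕ):ℝ) := by
    set w := d + 1 - 5 with hw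
    have hx : a^2 ≤ 2*w := by rw [← hda]; omega
    have hx' : (a:ℝ)^2 ≤ 2*(w:ℝ) := by exact_mod_cast hx
    have hpl := Nat.pow_le_choose (α := ℝ) 5 d
    rw [← hw] at hpl
    have hpl' : ((w:ℝ))^5/120 ≤ ((d.choose 5:ℕ):ℝ) := by
      have h120 : ((Nat.factorial 5 : ℕ):ℝ) = 120 := by norm_num [Nat.factorial]
      rwa [h120] at hpl
    calc ((a:ℝ)^10)/3840 = ((a:ℝ)^2/2)^5/120 := by ring
      _ ≤ ((w:ℝ))^5/120 := by
            have h0 : (0:ℝ) ≤ (a:ℝ)^2/2 := by positivity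
            gcongr <;> linarith
      _ ≤ _ := hpl'
  have hmne : (m:ℝ) ≠ 0 := ne_of_gt hmR
  have hane : (a:ℝ) ≠ 0 := ne_of_gt hApos
  -- final numeric bound
  calc ((m:ℝ))⁻¹ * ∑ k ∈ Finset.Icc 1 m,
        (((U.powersetCard (2 ^ k)).filter fun R =>
            ∃ x ∈ Q, ∃ y ∈ Q, x ≠ y ∧ capSet x y ⊆ R).card : ℝ) /
          ((U.powersetCard (2 ^ k)).card : ℝ)
      ≤ (m:ℝ)⁻¹ * ((Q.card:ℝ)^2 * (2*(a:ℝ)^5) / ((d.choose 5:ℕ):ℝ)) := by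
        apply mul_le_mul_of_nonneg_left _ (by positivity)
        exact le_trans (Finset.sum_le_sum hperk) hsum2
    _ ≤ (m:ℝ)⁻¹ * ((2*(m:ℝ)*(a:ℝ)^2)^2 * (2*(a:ℝ)^5) / ((a:ℝ)^10/3840)) := by
        gcongr
    _ = 30720*(m:ℝ)/(a:ℝ) := by field_simp; ring
    _ ≤ (d : ℝ) ^ (-(1 / 4) : ℝ) := by
        have hdaR : (d:ℝ) = (a:ℝ)^2 := by rw [hda]; push_cast; ring
        have hrhs : ((d:ℝ)) ^ (-(1/4) : ℝ) = (a:ℝ)^(-(1/2) : ℝ) := by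
          rw [hdaR, ← Real.rpow_natCast (a:ℝ) 2, ← Real.rpow_mul (le_of_lt hApos)]
          norm_num
        set q := m / 2 with hq
        have hq1 : 61441 ≤ q := by omega
        have hqnat : 30720 * m ≤ 2^q := by
          calc 30720*m ≤ 61441*q := by omega
            _ ≤ q*q := Nat.mul_le_mul_right q hq1
            _ ≤ 2^q := sq_le_two_pow q (by omega)
        have h2q : ((2:ℝ))^((q:ℕ):ℝ) ≤ (a:ℝ)^((1/2):ℝ) := by
          have haq : (a:ℝ) = (2:ℝ)^(m:ℕ) := by rw [ha]; push_cast; ring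
          rw [haq, ← Real.rpow_natCast (2:ℝ) m, ← Real.rpow_mul (by norm_num)]
          apply Real.rpow_le_rpow_of_exponent_le (by norm_num)
          have h2qm : 2*q ≤ m := by omega
          have h2qm' : 2*(q:ℝ) ≤ (m:ℝ) := by exact_mod_cast h2qm
          linarith
        have hmain : 30720*(m:ℝ) ≤ (a:ℝ)^((1/2):ℝ) := by
          calc 30720*(m:ℝ) ≤ ((2^q : ℕ):ℝ) := by exact_mod_cast hqnat
            _ = (2:ℝ)^((q:ℕ):ℝ) := by rw [Real.rpow_natCast]; push_cast; ring
            _ ≤ _ := h2q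
        rw [hrhs, div_le_iff₀ hApos]
        have hsplit : (a:ℝ)^(-(1/2):ℝ)*(a:ℝ) = (a:ℝ)^((1/2):ℝ) := by
          nth_rewrite 2 [← Real.rpow_one (a:ℝ)]
          rw [← Real.rpow_add hApos]
          norm_num
        rw [hsplit]
        exact hmain
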